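/- Let Z and X be finite-dimensional real normed vector spaces, K ⊆ Z a convex cone, m* ∈ Z*, and E, L ∈ B(Z,X) such that L(K) = X. Then the following are equivalent: (i) there exists p* ∈ X* such that p*(L(z)) − m*(z) ≤ 0 for all z ∈ K; (ii) the pair (E,L) satisfies the dissipation inequality on K with respect to m*. Moreover, if (ii) holds, then the storage function V in the dissipation inequality can be chosen to be a bounded linear functional on X. -/

import Mathlib

open Filter Set Pointwise

/-- A function `f : ℝ → E` is piecewise continuous on `[a, b]` if it is continuous
there except possibly at finitely many points, at each of which it possesses
one-sided limits. -/
def PiecewiseContinuousOn {E : Type*} [NormedAddCommGroup E]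
    (f : ℝ → E) (a b : ℝ) : Prop :=
  ∃ S : Finset ℝ, ContinuousOn f (Set.Icc a b \ S) ∧
    ∀ t ∈ S, (∃ l, Tendsto f (nhdsWithin t (Set.Iio t)) (nhds l)) ∧
      (∃ l, Tendsto f (nhdsWithin t (Set.Ioi t)) (nhds l))

/-- `V` is a storage function witnessing the dissipation inequality of the pair
`(E, L)` on the cone `K` with respect to the supply rate `w`: for every
`t0 ≤ t1` and every piecewise continuous `K`-valued `z` on `[t0, t1]` with
`d/dt E(z) = L(z)` (in integral form), one has
`V(E(z(t1))) ≤ V(E(z(t0))) + ∫_{t0}^{t1} w(z(t)) dt`. -/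
def DissipationIneqWith {Z X : Type*} [NormedAddCommGroup Z] [NormedSpace ℝ Z]
    [NormedAddCommGroup X] [NormedSpace ℝ X]
    (E L : Z →L[ℝ] X) (K : Set Z) (w : Z → ℝ) (V : X → ℝ) : Prop :=
  ∀ t0 t1 : ℝ, t0 ≤ t1 → ∀ z : ℝ → Z,
    (∀ t ∈ Set.Icc t0 t1, z t ∈ K) →
    PiecewiseContinuousOn z t0 t1 →
    (∀ s ∈ Set.Icc t0 t1, ∀ t ∈ Set.Icc t0 t1, E (z t) - E (z s) = ∫ τ in s..t, L (z τ)) →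
    V (E (z t1)) ≤ V (E (z t0)) + ∫ t in t0..t1, w (z t)

/-- A piecewise continuous function is bounded on `[a, b]`. -/
lemma PiecewiseContinuousOn.bounded {E : Type*} [NormedAddCommGroup E] {z : ℝ → E} {a b : ℝ}
    (h : PiecewiseContinuousOn z a b) : ∃ C, ∀ t ∈ Set.Icc a b, ‖z t‖ ≤ C := by
  obtain ⟨S, hcont, hlim⟩ := h
  exact (isCompact_Icc (a := a) (b := b)).induction_on
    (p := fun s => ∃ C, ∀ t ∈ s, ‖z t‖ ≤ C)
    ⟨0, by simp⟩
    (fun s t hst ⟨C, hC⟩ => ⟨C, fun u hu => hC u (hst hu)⟩)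
    (fun s t ⟨C, hC⟩ ⟨C', hC'⟩ => ⟨max C C', fun u hu => by
      rcases hu with hu | hu
      · exact le_trans (hC u hu) (le_max_left _ _)
      · exact le_trans (hC' u hu) (le_max_right _ _)⟩)
    (fun x hx => by
      by_cases hxS : x ∈ S
      · obtain ⟨⟨l₁, hl₁⟩, ⟨l₂, hl₂⟩⟩ := hlim x hxS
        set C : ℝ := max (max (‖l₁‖ + 1) (‖l₂‖ + 1)) ‖z x‖ with hCdef
        have h₁ : ∀ᶠ u in nhdsWithin x (Set.Iio x), ‖z u‖ ≤ C := by
          filter_upwards [hl₁.norm.eventually_lt_const (lt_add_one ‖l₁‖)] with u hu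
          exact le_trans hu.le (le_trans (le_max_left _ _) (le_max_left _ _))
        have h₂ : ∀ᶠ u in nhdsWithin x (Set.Ioi x), ‖z u‖ ≤ C := by
          filter_upwards [hl₂.norm.eventually_lt_const (lt_add_one ‖l₂‖)] with u hu
          exact le_trans hu.le (le_trans (le_max_right _ _) (le_max_left _ _))
        have h₃ : {u | ‖z u‖ ≤ C} ∈ nhds x := by
          rw [← nhdsLT_sup_nhdsGE x, Filter.mem_sup]
          refine ⟨h₁, ?_⟩
          have hIci : Set.Ici x = {x} ∪ Set.Ioi x := by
            ext u; simp [Set.mem_Ici, le_iff_lt_or_eq, or_comm, eq_comm]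
          rw [hIci, nhdsWithin_union, Filter.mem_sup, nhdsWithin_singleton,
            Filter.mem_pure]
          refine ⟨?_, h₂⟩
          show ‖z x‖ ≤ C
          exact le_max_right _ _
        exact ⟨{u | ‖z u‖ ≤ C}, nhdsWithin_le_nhds h₃, C, fun t ht => ht⟩
      · have hc : ContinuousWithinAt z (Set.Icc a b \ S) x := hcont x ⟨hx, hxS⟩
        have h₁ : ∀ᶠ u in nhdsWithin x (Set.Icc a b \ S), ‖z u‖ ≤ ‖z x‖ + 1 := by
          filter_upwards [hc.norm.eventually_lt_const (lt_add_one ‖z x‖)] with u hu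
          exact hu.le
        have hSc : ((S : Set ℝ)ᶜ) ∈ nhdsWithin x (Set.Icc a b) :=
          mem_nhdsWithin_of_mem_nhds ((S.finite_toSet.isClosed.isOpen_compl).mem_nhds hxS)
        have hrw : nhdsWithin x ((S : Set ℝ)ᶜ ∩ Set.Icc a b) = nhdsWithin x (Set.Icc a b) :=
          nhdsWithin_inter_of_mem hSc
        have hset : Set.Icc a b \ (S : Set ℝ) = (S : Set ℝ)ᶜ ∩ Set.Icc a b := by
          ext u; constructor
          · exact fun hu => ⟨hu.2, hu.1⟩
          · exact fun hu => ⟨hu.2, hu.1⟩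
        rw [hset, hrw] at h₁
        exact ⟨{u | ‖z u‖ ≤ ‖z x‖ + 1}, h₁, ‖z x‖ + 1, fun t ht => ht⟩)

open MeasureTheory in
lemma PiecewiseContinuousOn.intervalIntegrable {E : Type*} [NormedAddCommGroup E]
    {z : ℝ → E} {a b : ℝ} (h : PiecewiseContinuousOn z a b) (hab : a ≤ b) :
    IntervalIntegrable z volume a b := by
  obtain ⟨C, hC⟩ := h.bounded
  obtain ⟨S, hcont, -⟩ := h
  rw [intervalIntegrable_iff_integrableOn_Icc_of_le hab]
  have hD : MeasurableSet (Set.Icc a b \ (S : Set ℝ)) :=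
    measurableSet_Icc.diff (S.finite_toSet.measurableSet)
  have hsm : AEStronglyMeasurable z (volume.restrict (Set.Icc a b \ (S : Set ℝ))) :=
    hcont.aestronglyMeasurable hD
  have heq : (Set.Icc a b : Set ℝ) =ᵐ[volume] (Set.Icc a b \ (S : Set ℝ)) := by
    refine MeasureTheory.ae_eq_set.mpr ?_
    refine ⟨measure_mono_null (fun u hu => ?_) (S.finite_toSet.countable.measure_zero _), ?_⟩
    · by_contra h'; exact hu.2 ⟨hu.1, h'⟩
    · exact measure_mono_null (fun u hu => (hu.2 hu.1.1).elim) measure_empty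
  have h1 : AEStronglyMeasurable z (volume.restrict (Set.Icc a b)) := by
    rw [Measure.restrict_congr_set heq]; exact hsm
  have h2 : HasFiniteIntegral z (volume.restrict (Set.Icc a b)) :=
    HasFiniteIntegral.restrict_of_bounded (C := C) measure_Icc_lt_top
      ((ae_restrict_iff' measurableSet_Icc).2 (ae_of_all _ hC))
  exact ⟨h1, h2⟩

open MeasureTheory in
/-- A bounded linear functional `p*` with `p*∘L ≤ m*` on `K` is a storage function. -/
lemma linear_storage {Z X : Type*} [NormedAddCommGroup Z] [NormedSpace ℝ Z]
    [FiniteDimensional ℝ Z] [NormedAddCommGroup X] [NormedSpace ℝ X] [FiniteDimensional ℝ X]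
    (K : Set Z) (mstar : Z →L[ℝ] ℝ) (E L : Z →L[ℝ] X) (pstar : X →L[ℝ] ℝ)
    (hp : ∀ z ∈ K, pstar (L z) - mstar z ≤ 0) :
    DissipationIneqWith E L K (fun z => mstar z) (fun x => pstar x) := by
  intro t0 t1 ht z hzK hpc hint
  have hz : IntervalIntegrable z volume t0 t1 := hpc.intervalIntegrable ht
  have hLz : IntervalIntegrable (fun t => L (z t)) volume t0 t1 :=
    ⟨L.integrable_comp hz.1, L.integrable_comp hz.2⟩
  have hmz : IntervalIntegrable (fun t => mstar (z t)) volume t0 t1 :=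
    ⟨mstar.integrable_comp hz.1, mstar.integrable_comp hz.2⟩
  have hpLz : IntervalIntegrable (fun t => pstar (L (z t))) volume t0 t1 :=
    ⟨pstar.integrable_comp hLz.1, pstar.integrable_comp hLz.2⟩
  have heq : E (z t1) - E (z t0) = ∫ τ in t0..t1, L (z τ) :=
    hint t0 ⟨le_refl _, ht⟩ t1 ⟨ht, le_refl _⟩
  have h1 : pstar (E (z t1)) - pstar (E (z t0)) = ∫ t in t0..t1, pstar (L (z t)) := by
    rw [← map_sub, heq, pstar.intervalIntegral_comp_comm hLz]
  have h2 : (∫ t in t0..t1, pstar (L (z t))) ≤ ∫ t in t0..t1, mstar (z t) :=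
    intervalIntegral.integral_mono_on ht hpLz hmz
      (fun x hx => by have := hp _ (hzK x hx); linarith)
  simp only []
  linarith

/-- The dissipation inequality gives a solution to the conic inequality. -/
lemma dissipation_to_conic {Z X : Type*} [NormedAddCommGroup Z] [NormedSpace ℝ Z]
    [FiniteDimensional ℝ Z] [NormedAddCommGroup X] [NormedSpace ℝ X] [FiniteDimensional ℝ X]
    (K : Set Z) (hKcone : ∀ z ∈ K, ∀ α : ℝ, 0 ≤ α → α • z ∈ K) (hKconv : Convex ℝ K)
    (mstar : Z →L[ℝ] ℝ) (E L : Z →L[ℝ] X) (hLK : L '' K = Set.univ)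
    (V : X → ℝ) (hdiss : DissipationIneqWith E L K (fun z => mstar z) V) :
    ∃ pstar : X →L[ℝ] ℝ, ∀ z ∈ K, pstar (L z) - mstar z ≤ 0 := by
  -- m* is nonnegative on K ∩ ker L (constant trajectories)
  have hker : ∀ z ∈ K, L z = 0 → 0 ≤ mstar z := by
    intro z hz hz0
    have h := hdiss 0 1 zero_le_one (fun _ => z) (fun t _ => hz)
      ⟨∅, continuous_const.continuousOn, by simp⟩
      (fun s _ t _ => by simp [hz0])
    have hc : (∫ t in (0:ℝ)..1, mstar z) = mstar z := by
      rw [intervalIntegral.integral_const]; simp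
    rw [hc] at h
    linarith
  -- K is closed under addition
  have hadd : ∀ z ∈ K, ∀ z' ∈ K, z + z' ∈ K := by
    intro z hz z' hz'
    have hmid : (1/2 : ℝ) • z + (1/2 : ℝ) • z' ∈ K :=
      hKconv hz hz' (by norm_num) (by norm_num) (by norm_num)
    have := hKcone _ hmid 2 (by norm_num)
    have h2 : (2:ℝ) • ((1/2 : ℝ) • z + (1/2 : ℝ) • z') = z + z' := by
      rw [smul_add, smul_smul, smul_smul]; norm_num
    rwa [h2] at this
  -- feasibility
  have hfeas : ∀ x : X, ∃ z, z ∈ K ∧ L z = x := by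
    intro x
    have : x ∈ L '' K := by rw [hLK]; trivial
    obtain ⟨z, hz, hzx⟩ := this
    exact ⟨z, hz, hzx⟩
  -- the sublinear functional
  set N : X → ℝ := fun x => sInf {r : ℝ | ∃ z, z ∈ K ∧ L z = x ∧ mstar z = r} with hN
  have hne : ∀ x : X, {r : ℝ | ∃ z, z ∈ K ∧ L z = x ∧ mstar z = r}.Nonempty := by
    intro x; obtain ⟨z, hz, hzx⟩ := hfeas x; exact ⟨mstar z, z, hz, hzx, rfl⟩
  have hbdd : ∀ x : X, BddBelow {r : ℝ | ∃ z, z ∈ K ∧ L z = x ∧ mstar z = r} := by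
    intro x
    obtain ⟨z', hz', hzx'⟩ := hfeas (-x)
    refine ⟨-mstar z', fun r hr => ?_⟩
    obtain ⟨z, hz, hzx, rfl⟩ := hr
    have hmem : z + z' ∈ K := hadd z hz z' hz'
    have h0 : L (z + z') = 0 := by rw [map_add, hzx, hzx']; abel
    have := hker _ hmem h0
    rw [map_add] at this
    linarith
  have hNle : ∀ z ∈ K, N (L z) ≤ mstar z :=
    fun z hz => csInf_le (hbdd _) ⟨z, hz, rfl, rfl⟩
  -- subadditivity
  have hNadd : ∀ x y : X, N (x + y) ≤ N x + N y := by
    intro x y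
    have step : ∀ r ∈ {r : ℝ | ∃ z, z ∈ K ∧ L z = x ∧ mstar z = r},
        ∀ s ∈ {r : ℝ | ∃ z, z ∈ K ∧ L z = y ∧ mstar z = r}, N (x + y) ≤ r + s := by
      rintro r ⟨zr, hzr, hzrx, rfl⟩ s ⟨zs, hzs, hzsy, rfl⟩
      refine csInf_le (hbdd _) ⟨zr + zs, hadd _ hzr _ hzs, ?_, ?_⟩
      · rw [map_add, hzrx, hzsy]
      · rw [map_add]
    have h1 : ∀ r ∈ {r : ℝ | ∃ z, z ∈ K ∧ L z = x ∧ mstar z = r}, N (x + y) - r ≤ N y :=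
      fun r hr => le_csInf (hne y) (fun s hs => by have := step r hr s hs; linarith)
    have h2 : N (x + y) - N y ≤ N x :=
      le_csInf (hne x) (fun r hr => by have := h1 r hr; linarith)
    linarith
  -- positive homogeneity
  have hNhom : ∀ c : ℝ, 0 < c → ∀ x : X, N (c • x) = c * N x := by
    intro c hc x
    have hset : {r : ℝ | ∃ z, z ∈ K ∧ L z = c • x ∧ mstar z = r} =
        c • {r : ℝ | ∃ z, z ∈ K ∧ L z = x ∧ mstar z = r} := by
      ext r; constructor
      · rintro ⟨z, hz, hzx, rfl⟩
        refine ⟨mstar (c⁻¹ • z), ⟨c⁻¹ • z, hKcone z hz c⁻¹ (by positivity), ?_, rfl⟩, ?_⟩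
        · rw [map_smul, hzx, smul_smul, inv_mul_cancel₀ hc.ne', one_smul]
        · show c • (mstar (c⁻¹ • z)) = mstar z
          rw [map_smul, smul_eq_mul, smul_eq_mul, ← mul_assoc, mul_inv_cancel₀ hc.ne', one_mul]
      · rintro ⟨r', ⟨z, hz, hzx, rfl⟩, rfl⟩
        refine ⟨c • z, hKcone z hz c hc.le, ?_, ?_⟩
        · rw [map_smul, hzx]
        · show mstar (c • z) = c • (mstar z)
          exact map_smul mstar c z
    rw [hN]
    simp only []
    rw [hset, Real.sInf_smul_of_nonneg hc.le]
    rfl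
  -- N 0 ≥ 0
  have hN0 : (0 : ℝ) ≤ N 0 :=
    le_csInf (hne 0) (by rintro r ⟨z, hz, hz0, rfl⟩; exact hker z hz hz0)
  -- Hahn-Banach extension from the trivial subspace
  obtain ⟨g, -, hg⟩ := exists_extension_of_le_sublinear (⟨⊥, 0⟩ : X →ₗ.[ℝ] ℝ) N hNhom hNadd
    (fun x => by
      have hx0 : (x : X) = 0 := (Submodule.mem_bot ℝ).1 x.2
      rw [hx0]
      simpa using hN0)
  refine ⟨LinearMap.toContinuousLinearMap g, fun z hz => ?_⟩
  have : g (L z) ≤ N (L z) := hg (L z)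
  have h2 := hNle z hz
  have h3 : (LinearMap.toContinuousLinearMap g) (L z) = g (L z) := rfl
  rw [h3]
  linarith

/-- Corollary: dissipation inequality. The conic inequality is
solvable iff `(E, L)` satisfies the dissipation inequality on `K` w.r.t. `m*`
(i.e. some continuous storage `V` with `V 0 = 0` exists); moreover in that case
the storage function can be chosen to be a bounded linear functional on `X`. -/
theorem exists_functional_conic_ineq_iff_dissipation
    {Z X : Type*} [NormedAddCommGroup Z] [NormedSpace ℝ Z] [FiniteDimensional ℝ Z]
    [NormedAddCommGroup X] [NormedSpace ℝ X] [FiniteDimensional ℝ X]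
    (K : Set Z) (hKcone : ∀ z ∈ K, ∀ α : ℝ, 0 ≤ α → α • z ∈ K) (hKconv : Convex ℝ K)
    (mstar : Z →L[ℝ] ℝ) (E L : Z →L[ℝ] X) (hLK : L '' K = Set.univ) :
    ((∃ pstar : X →L[ℝ] ℝ, ∀ z ∈ K, pstar (L z) - mstar z ≤ 0) ↔
      (∃ V : X → ℝ, Continuous V ∧ V 0 = 0 ∧
        DissipationIneqWith E L K (fun z => mstar z) V)) ∧
    ((∃ V : X → ℝ, Continuous V ∧ V 0 = 0 ∧
        DissipationIneqWith E L K (fun z => mstar z) V) →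
      ∃ q : X →L[ℝ] ℝ, DissipationIneqWith E L K (fun z => mstar z) (fun x => q x)) := by
  constructor
  · constructor
    · rintro ⟨p, hp⟩
      exact ⟨fun x => p x, p.continuous, by simp, linear_storage K mstar E L p hp⟩
    · rintro ⟨V, hVc, hV0, hd⟩
      exact dissipation_to_conic K hKcone hKconv mstar E L hLK V hd
  · rintro ⟨V, hVc, hV0, hd⟩
    obtain ⟨p, hp⟩ := dissipation_to_conic K hKcone hKconv mstar E L hLK V hd
    exact ⟨p, linear_storage K mstar E L p hp⟩
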